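/- (Huemer et al.) Let R and B be finite point sets in ℝ² with |R| = |B| = n ≥ 1, and let M be a perfect matching between R and B maximizing the total squared Euclidean distance Σ ‖r - b‖² over matched pairs (r,b). Then the n closed disks B(rb), each having a matched segment rb as diameter, have a common point. -/

import Mathlib

open Filter Finset Set Topology

variable {E : Type*} [NormedAddCommGroup E] [InnerProductSpace ℝ E] [FiniteDimensional ℝ E]

local notation "⟪" x ", " y "⟫" => @inner ℝ _ _ x y

omit [FiniteDimensional ℝ E] in
/-- inner-product form of the swap inequality -/
lemma inner_swap_form (o p q p' q' : E)
    (h : ‖p - q'‖ ^ 2 + ‖p' - q‖ ^ 2 ≤ ‖p - q‖ ^ 2 + ‖p' - q'‖ ^ 2) :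
    ⟪o - p, o - q⟫ + ⟪o - p', o - q'⟫ ≤ ⟪o - p, o - q'⟫ + ⟪o - p', o - q⟫ := by
  have key : ∀ a b : E, ⟪o - a, o - b⟫ = (‖o - a‖ ^ 2 + ‖o - b‖ ^ 2 - ‖a - b‖ ^ 2) / 2 := by
    intro a b
    have h1 : ‖(o - a) - (o - b)‖ ^ 2
        = ‖o - a‖ ^ 2 - 2 * ⟪o - a, o - b⟫ + ‖o - b‖ ^ 2 := norm_sub_sq_real _ _
    have h2 : (o - a) - (o - b) = b - a := by abel
    rw [h2] at h1
    have h3 : ‖b - a‖ = ‖a - b‖ := norm_sub_rev _ _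
    rw [h3] at h1
    linarith
  rw [key p q, key p' q', key p q', key p' q]
  linarith

lemma huemer_core {ι : Type*} [Fintype ι] [Nonempty ι] (r b : ι → E)
    (hswap : ∀ i j, ‖r i - b j‖ ^ 2 + ‖r j - b i‖ ^ 2 ≤ ‖r i - b i‖ ^ 2 + ‖r j - b j‖ ^ 2) :
    ∃ o : E, ∀ i, ⟪o - r i, o - b i⟫ ≤ 0 := by
  classical
  have hne : (univ : Finset ι).Nonempty := univ_nonempty
  set f : ι → E → ℝ := fun i x => ⟪x - r i, x - b i⟫ with hf
  set g : E → ℝ := fun x => univ.sup' hne (fun i => f i x) with hg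
  -- continuity
  have hfc : ∀ i, Continuous (f i) := by
    intro i
    exact Continuous.inner (continuous_id.sub continuous_const)
      (continuous_id.sub continuous_const)
  have hgc : Continuous g := Continuous.finset_sup'_apply hne (fun i _ => hfc i)
  -- coercivity
  have hcoer : Tendsto g (cocompact E) atTop := by
    obtain ⟨i₀⟩ := ‹Nonempty ι›
    set c : ℝ := ‖r i₀‖ + ‖b i₀‖ with hc
    set c' : ℝ := ‖r i₀‖ * ‖b i₀‖ with hc'
    have hlow : ∀ x : E, ‖x‖ ^ 2 - ‖x‖ * c - c' ≤ g x := by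
      intro x
      have h1 : f i₀ x ≤ g x := Finset.le_sup' (fun i => f i x) (mem_univ i₀)
      have h2 : ‖x‖ ^ 2 - ‖x‖ * c - c' ≤ f i₀ x := by
        have e1 : f i₀ x = ⟪x, x⟫ - ⟪x, b i₀⟫ - ⟪r i₀, x⟫ + ⟪r i₀, b i₀⟫ := by
          simp only [hf]
          rw [inner_sub_left, inner_sub_right, inner_sub_right]
          ring
        have e2 : (⟪x, x⟫ : ℝ) = ‖x‖ ^ 2 := real_inner_self_eq_norm_sq x
        have e3 : |(⟪x, b i₀⟫ : ℝ)| ≤ ‖x‖ * ‖b i₀‖ := abs_real_inner_le_norm _ _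
        have e4 : |(⟪r i₀, x⟫ : ℝ)| ≤ ‖r i₀‖ * ‖x‖ := abs_real_inner_le_norm _ _
        have e5 : |(⟪r i₀, b i₀⟫ : ℝ)| ≤ ‖r i₀‖ * ‖b i₀‖ := abs_real_inner_le_norm _ _
        rw [e1, e2]
        rw [abs_le] at e3 e4 e5
        simp only [hc, hc']
        nlinarith [e3.1, e3.2, e4.1, e4.2, e5.1, e5.2]
      linarith
    have hφ : Tendsto (fun t : ℝ => t ^ 2 - t * c - c') atTop atTop := by
      have hbase : Tendsto (fun t : ℝ => t - c') atTop atTop :=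
        tendsto_atTop_add_const_right _ _ tendsto_id
      refine tendsto_atTop_mono' atTop ?_ hbase
      filter_upwards [eventually_ge_atTop (c + 1), eventually_ge_atTop (0 : ℝ)] with t ht ht0
      nlinarith
    exact tendsto_atTop_mono' _ (Eventually.of_forall hlow)
      (hφ.comp tendsto_norm_cocompact_atTop)
  obtain ⟨o, ho⟩ := hgc.exists_forall_le hcoer
  by_cases hs : g o ≤ 0
  · exact ⟨o, fun i => le_trans (Finset.le_sup' (fun i => f i o) (mem_univ i)) hs⟩
  push_neg at hs
  exfalso
  set s : ℝ := g o with hso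
  set Act : Finset ι := univ.filter (fun i => f i o = s) with hAct
  have hActmem : ∀ i ∈ Act, f i o = s := fun i hi => (mem_filter.mp hi).2
  have hleS : ∀ i, f i o ≤ s := fun i => Finset.le_sup' (fun i => f i o) (mem_univ i)
  set φv : ι → E := fun i => (o - r i) + (o - b i) with hφv
  set T : Finset E := Act.image φv with hT
  -- swap inequality at o for active indices
  have hswap' : ∀ i ∈ Act, ∀ j ∈ Act,
      2 * s ≤ ⟪o - r i, o - b j⟫ + ⟪o - r j, o - b i⟫ := by
    intro i hi j hj
    have h1 := inner_swap_form o (r i) (b i) (r j) (b j) (hswap i j)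
    have h2 : (⟪o - r i, o - b i⟫ : ℝ) = s := hActmem i hi
    have h3 : (⟪o - r j, o - b j⟫ : ℝ) = s := hActmem j hj
    linarith
  by_cases h0 : (0 : E) ∈ convexHull ℝ (T : Set E)
  · -- weights exist: contradiction with swap inequalities
    rw [Finset.convexHull_eq] at h0
    obtain ⟨w, hw0, hw1, hwc⟩ := h0
    rw [Finset.centerMass_eq_of_sum_1 _ _ hw1] at hwc
    have hrep : ∀ y ∈ T, ∃ i, i ∈ Act ∧ φv i = y := by
      intro y hy
      obtain ⟨i, hi, hiy⟩ := mem_image.mp hy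
      exact ⟨i, hi, hiy⟩
    choose rep hrepAct hrepEq using hrep
    set u' : {y // y ∈ T} → E := fun y => o - r (rep y.1 y.2) with hu'
    set v' : {y // y ∈ T} → E := fun y => o - b (rep y.1 y.2) with hv'
    set U : E := ∑ y ∈ T.attach, w y.1 • u' y with hU
    set V : E := ∑ y ∈ T.attach, w y.1 • v' y with hV
    have hUV : U + V = 0 := by
      rw [hU, hV, ← Finset.sum_add_distrib]
      have he : ∀ y ∈ T.attach, w y.1 • u' y + w y.1 • v' y = w y.1 • (id y.1) := by
        intro y _
        rw [← smul_add]
        congr 1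
        have hrw := hrepEq y.1 y.2
        simp only [hφv] at hrw
        rw [id_eq, ← hrw]
      rw [Finset.sum_congr rfl he, Finset.sum_attach T (fun y => w y • id y)]
      exact hwc
    have hinner_np : (⟪U, V⟫ : ℝ) ≤ 0 := by
      have hVU : V = -U := by
        rw [eq_neg_iff_add_eq_zero, add_comm]
        exact hUV
      rw [hVU, inner_neg_right, real_inner_self_eq_norm_sq]
      simp only [neg_nonpos]
      positivity
    have hexp : (⟪U, V⟫ : ℝ)
        = ∑ y ∈ T.attach, ∑ z ∈ T.attach, (w y.1 * w z.1) * ⟪u' y, v' z⟫ := by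
      rw [hU, hV, sum_inner]
      refine Finset.sum_congr rfl (fun y _ => ?_)
      rw [real_inner_smul_left, inner_sum, Finset.mul_sum]
      refine Finset.sum_congr rfl (fun z _ => ?_)
      rw [real_inner_smul_right]
      ring
    have hexp' : (⟪U, V⟫ : ℝ)
        = ∑ y ∈ T.attach, ∑ z ∈ T.attach, (w y.1 * w z.1) * ⟪u' z, v' y⟫ := by
      rw [hexp, Finset.sum_comm]
      refine Finset.sum_congr rfl (fun y _ => Finset.sum_congr rfl (fun z _ => ?_))
      ring
    have hsum1 : (∑ z ∈ T.attach, w z.1) = 1 := by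
      rw [Finset.sum_attach T w]; exact hw1
    have hdouble : 2 * s ≤ (⟪U, V⟫ : ℝ) + (⟪U, V⟫ : ℝ) := by
      have hsplit : ∑ y ∈ T.attach, ∑ z ∈ T.attach,
          ((w y.1 * w z.1) * ⟪u' y, v' z⟫ + (w y.1 * w z.1) * ⟪u' z, v' y⟫)
          = (⟪U, V⟫ : ℝ) + (⟪U, V⟫ : ℝ) := by
        calc ∑ y ∈ T.attach, ∑ z ∈ T.attach,
            ((w y.1 * w z.1) * ⟪u' y, v' z⟫ + (w y.1 * w z.1) * ⟪u' z, v' y⟫)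
            = ∑ y ∈ T.attach, ((∑ z ∈ T.attach, (w y.1 * w z.1) * ⟪u' y, v' z⟫)
              + (∑ z ∈ T.attach, (w y.1 * w z.1) * ⟪u' z, v' y⟫)) :=
              Finset.sum_congr rfl (fun y _ => Finset.sum_add_distrib)
          _ = (∑ y ∈ T.attach, ∑ z ∈ T.attach, (w y.1 * w z.1) * ⟪u' y, v' z⟫)
              + (∑ y ∈ T.attach, ∑ z ∈ T.attach, (w y.1 * w z.1) * ⟪u' z, v' y⟫) :=
              Finset.sum_add_distrib
          _ = (⟪U, V⟫ : ℝ) + (⟪U, V⟫ : ℝ) := by rw [← hexp, ← hexp']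
      rw [← hsplit]
      have key : ∀ y ∈ T.attach,
          2 * s * w y.1 * (∑ z ∈ T.attach, w z.1)
          ≤ ∑ z ∈ T.attach,
            ((w y.1 * w z.1) * ⟪u' y, v' z⟫ + (w y.1 * w z.1) * ⟪u' z, v' y⟫) := by
        intro y _
        rw [Finset.mul_sum]
        refine Finset.sum_le_sum (fun z _ => ?_)
        have hsw := hswap' (rep y.1 y.2) (hrepAct y.1 y.2) (rep z.1 z.2) (hrepAct z.1 z.2)
        have hwy : 0 ≤ w y.1 := hw0 y.1 y.2
        have hwz : 0 ≤ w z.1 := hw0 z.1 z.2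
        have hmul := mul_le_mul_of_nonneg_left hsw (mul_nonneg hwy hwz)
        simp only [hu', hv']
        nlinarith [hmul]
      calc 2 * s = ∑ y ∈ T.attach, 2 * s * w y.1 * (∑ z ∈ T.attach, w z.1) := by
            rw [hsum1]
            have : ∑ y ∈ T.attach, 2 * s * w y.1 * 1
                = 2 * s * ∑ y ∈ T.attach, w y.1 := by
              rw [Finset.mul_sum]
              exact Finset.sum_congr rfl (fun _ _ => by ring)
            rw [this, hsum1, mul_one]
        _ ≤ _ := Finset.sum_le_sum key
    linarith
  · -- separation: perturb o and contradict minimality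
    have hconv : Convex ℝ (convexHull ℝ (T : Set E)) := convex_convexHull ℝ _
    have hclosed : IsClosed (convexHull ℝ (T : Set E)) := T.finite_toSet.isClosed_convexHull ℝ
    obtain ⟨L, u, hLu, huL⟩ := geometric_hahn_banach_closed_point hconv hclosed h0
    have hu0 : u < 0 := by simpa using huL
    set v : E := (InnerProductSpace.toDual ℝ E).symm L with hv
    have hvL : ∀ x : E, ⟪v, x⟫ = L x := fun x => InnerProductSpace.toDual_symm_apply
    have hActv : ∀ i ∈ Act, (⟪v, φv i⟫ : ℝ) < u := by
      intro i hi
      rw [hvL]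
      exact hLu _ (subset_convexHull ℝ _ (by exact_mod_cast Finset.mem_image_of_mem φv hi))
    have hFval : ∀ (ε : ℝ) (i : ι),
        f i (o + ε • v) = f i o + ε * ⟪v, φv i⟫ + ε ^ 2 * ‖v‖ ^ 2 := by
      intro ε i
      simp only [hf, hφv]
      have e1 : o + ε • v - r i = (o - r i) + ε • v := by abel
      have e2 : o + ε • v - b i = (o - b i) + ε • v := by abel
      rw [e1, e2]
      simp only [inner_add_left, inner_add_right, real_inner_smul_left, real_inner_smul_right,
        real_inner_self_eq_norm_sq, real_inner_comm v, norm_smul, Real.norm_eq_abs,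
        mul_pow, sq_abs]
      ring
    have hev : ∀ i, ∀ᶠ ε in 𝓝[>] (0 : ℝ), f i (o + ε • v) < s := by
      intro i
      by_cases hi : i ∈ Act
      · have hiv := hActv i hi
        have hio : f i o = s := hActmem i hi
        have hδ : (0 : ℝ) < -u / (‖v‖ ^ 2 + 1) := by
          apply div_pos (by linarith) (by positivity)
        filter_upwards [Ioo_mem_nhdsGT hδ] with ε hε
        rw [hFval, hio]
        have hε0 : 0 < ε := hε.1
        have hεu : ε * (‖v‖ ^ 2 + 1) < -u := by
          rw [← lt_div_iff₀ (by positivity)]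
          exact hε.2
        nlinarith [hε0, sq_nonneg ‖v‖, mul_lt_mul_of_pos_left hiv hε0]
      · have hio : f i o < s := by
          refine lt_of_le_of_ne (hleS i) ?_
          intro h
          exact hi (mem_filter.mpr ⟨mem_univ i, h⟩)
        have hcont : Tendsto (fun ε : ℝ => f i (o + ε • v)) (𝓝 0) (𝓝 (f i o)) := by
          have hmap : Continuous (fun ε : ℝ => o + ε • v) :=
            continuous_const.add (continuous_id.smul continuous_const)
          have h := ((hfc i).comp hmap).tendsto 0
          simpa [Function.comp_def] using h
        exact (hcont.eventually_lt_const hio).filter_mono nhdsWithin_le_nhds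
    have hall : ∀ᶠ ε in 𝓝[>] (0 : ℝ), ∀ i, f i (o + ε • v) < s :=
      eventually_all.mpr hev
    obtain ⟨ε, hε⟩ := hall.exists
    have hlt : g (o + ε • v) < s := by
      rw [hg]
      exact (Finset.sup'_lt_iff hne).mpr (fun i _ => hε i)
    exact absurd (ho (o + ε • v)) (not_le.mpr hlt)

omit [FiniteDimensional ℝ E] in
lemma point_in_diameter_ball (o p q : E) (h : ⟪o - p, o - q⟫ ≤ 0) :
    dist o (midpoint ℝ p q) ≤ dist p q / 2 := by
  have hm : o - midpoint ℝ p q = (2 : ℝ)⁻¹ • ((o - p) + (o - q)) := by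
    rw [midpoint_eq_smul_add]
    match_scalars <;> norm_num
  have h1 : ‖o - midpoint ℝ p q‖ ^ 2 = (1 / 4) * ‖(o - p) + (o - q)‖ ^ 2 := by
    rw [hm, norm_smul, Real.norm_eq_abs, mul_pow, sq_abs]
    norm_num
  have h2 : ‖(o - p) + (o - q)‖ ^ 2 = ‖o - p‖ ^ 2 + 2 * ⟪o - p, o - q⟫ + ‖o - q‖ ^ 2 :=
    norm_add_sq_real _ _
  have h3 : ‖p - q‖ ^ 2 = ‖o - q‖ ^ 2 - 2 * ⟪o - q, o - p⟫ + ‖o - p‖ ^ 2 := by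
    have h4 := norm_sub_sq_real (o - q) (o - p)
    have e : (o - q) - (o - p) = p - q := by abel
    rw [e] at h4
    exact h4
  have hcomm : (⟪o - q, o - p⟫ : ℝ) = ⟪o - p, o - q⟫ := real_inner_comm _ _
  rw [dist_eq_norm, dist_eq_norm]
  have hsq : ‖o - midpoint ℝ p q‖ ^ 2 ≤ (‖p - q‖ / 2) ^ 2 := by nlinarith
  have hroot := Real.sqrt_le_sqrt hsq
  rwa [Real.sqrt_sq (norm_nonneg _), Real.sqrt_sq (by positivity)] at hroot

theorem huemer_maxsum_matching_disks_common_point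
    (n : ℕ) (hn : 1 ≤ n)
    (R B : Finset (EuclideanSpace ℝ (Fin 2)))
    (hR : R.card = n) (hB : B.card = n)
    (M : (R : Finset (EuclideanSpace ℝ (Fin 2))) ≃ (B : Finset (EuclideanSpace ℝ (Fin 2))))
    (hmax : ∀ N : (R : Finset (EuclideanSpace ℝ (Fin 2))) ≃ (B : Finset (EuclideanSpace ℝ (Fin 2))),
      ∑ r : (R : Finset (EuclideanSpace ℝ (Fin 2))), ‖(r : EuclideanSpace ℝ (Fin 2)) - N r‖ ^ 2 ≤
        ∑ r : (R : Finset (EuclideanSpace ℝ (Fin 2))), ‖(r : EuclideanSpace ℝ (Fin 2)) - M r‖ ^ 2) :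
    ∃ o : EuclideanSpace ℝ (Fin 2),
      ∀ r : (R : Finset (EuclideanSpace ℝ (Fin 2))),
        o ∈ Metric.closedBall (midpoint ℝ (r : EuclideanSpace ℝ (Fin 2)) (M r))
            (dist (r : EuclideanSpace ℝ (Fin 2)) (M r) / 2) := by
  classical
  have hRne : R.Nonempty := Finset.card_pos.mp (by rw [hR]; exact hn)
  have hne : Nonempty {x // x ∈ R} := ⟨⟨hRne.choose, hRne.choose_spec⟩⟩
  have hswap : ∀ i j : {x // x ∈ R},
      ‖(i : EuclideanSpace ℝ (Fin 2)) - (M j : EuclideanSpace ℝ (Fin 2))‖ ^ 2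
        + ‖(j : EuclideanSpace ℝ (Fin 2)) - (M i : EuclideanSpace ℝ (Fin 2))‖ ^ 2
      ≤ ‖(i : EuclideanSpace ℝ (Fin 2)) - (M i : EuclideanSpace ℝ (Fin 2))‖ ^ 2
        + ‖(j : EuclideanSpace ℝ (Fin 2)) - (M j : EuclideanSpace ℝ (Fin 2))‖ ^ 2 := by
    intro i j
    rcases eq_or_ne i j with rfl | hij
    · exact le_refl _
    · have hN := hmax ((Equiv.swap i j).trans M)
      simp only [Equiv.trans_apply] at hN
      set F : {x // x ∈ R} → ℝ :=
        fun x => ‖(x : EuclideanSpace ℝ (Fin 2)) - (M (Equiv.swap i j x) : EuclideanSpace ℝ (Fin 2))‖ ^ 2 with hF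
      set G : {x // x ∈ R} → ℝ :=
        fun x => ‖(x : EuclideanSpace ℝ (Fin 2)) - (M x : EuclideanSpace ℝ (Fin 2))‖ ^ 2 with hG
      have hFG : ∀ x, x ≠ i → x ≠ j → F x - G x = 0 := by
        intro x hxi hxj
        simp only [hF, hG, Equiv.swap_apply_of_ne_of_ne hxi hxj, sub_self]
      have h1 : ∑ x ∈ ({i, j} : Finset _), (F x - G x) = ∑ x, (F x - G x) := by
        refine Finset.sum_subset (Finset.subset_univ _) (fun x _ hx => ?_)
        simp only [Finset.mem_insert, Finset.mem_singleton] at hx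
        push_neg at hx
        exact hFG x hx.1 hx.2
      rw [Finset.sum_pair hij, Finset.sum_sub_distrib] at h1
      have h2 : ∑ x, F x ≤ ∑ x, G x := hN
      have hFi : F i = ‖(i : EuclideanSpace ℝ (Fin 2)) - (M j : EuclideanSpace ℝ (Fin 2))‖ ^ 2 := by
        simp only [hF, Equiv.swap_apply_left]
      have hFj : F j = ‖(j : EuclideanSpace ℝ (Fin 2)) - (M i : EuclideanSpace ℝ (Fin 2))‖ ^ 2 := by
        simp only [hF, Equiv.swap_apply_right]
      have hGi : G i = ‖(i : EuclideanSpace ℝ (Fin 2)) - (M i : EuclideanSpace ℝ (Fin 2))‖ ^ 2 := rfl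
      have hGj : G j = ‖(j : EuclideanSpace ℝ (Fin 2)) - (M j : EuclideanSpace ℝ (Fin 2))‖ ^ 2 := rfl
      rw [hFi, hFj, hGi, hGj] at h1
      linarith
  obtain ⟨o, ho⟩ := huemer_core (fun i : {x // x ∈ R} => (i : EuclideanSpace ℝ (Fin 2)))
    (fun i => (M i : EuclideanSpace ℝ (Fin 2))) hswap
  refine ⟨o, fun i => ?_⟩
  rw [Metric.mem_closedBall]
  exact point_in_diameter_ball o _ _ (ho i)
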